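/- L has a spectral gap of size 1 above its kernel: for every compactly supported C² function f : ℝ → ℝ with ∫_ℝ f(x)/cosh x dx = 0, one has ∫_ℝ (f'(x)² + (2 tanh²x − 1) f(x)²) dx ≥ ∫_ℝ f(x)² dx. -/

import Mathlib

open MeasureTheory Real Filter Topology Set

noncomputable def lgT (x : ℝ) : ℝ := Real.tanh x
noncomputable def lgE (x : ℝ) : ℝ := (Real.cosh x)⁻¹

lemma lgT_eq (x : ℝ) : lgT x = Real.sinh x / Real.cosh x := Real.tanh_eq_sinh_div_cosh x

lemma lgE_pos (x : ℝ) : 0 < lgE x := inv_pos.2 (Real.cosh_pos x)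

lemma lgE2 (x : ℝ) : lgE x ^ 2 = 1 - lgT x ^ 2 := by
  rw [lgT_eq, lgE]
  have h := (Real.cosh_pos x).ne'
  field_simp
  linear_combination -(Real.cosh_sq_sub_sinh_sq x)

lemma lgT_ne {x : ℝ} (hx : x ≠ 0) : lgT x ≠ 0 := by
  rw [lgT_eq]
  exact div_ne_zero (Real.sinh_ne_zero.2 hx) (Real.cosh_pos x).ne'

lemma lgT_zero : lgT 0 = 0 := Real.tanh_zero

lemma lgE_zero : lgE 0 = 1 := by simp [lgE]

lemma hasDerivAt_lgT (x : ℝ) : HasDerivAt lgT (1 - lgT x ^ 2) x := by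
  have h := (Real.hasDerivAt_sinh x).div (Real.hasDerivAt_cosh x) (Real.cosh_pos x).ne'
  have he : lgT = fun y => Real.sinh y / Real.cosh y := funext lgT_eq
  rw [he]
  have hc := (Real.cosh_pos x).ne'
  refine h.congr_deriv ?_
  field_simp

lemma hasDerivAt_lgE (x : ℝ) : HasDerivAt lgE (-(lgE x * lgT x)) x := by
  have h := (Real.hasDerivAt_cosh x).inv (Real.cosh_pos x).ne'
  have hc := (Real.cosh_pos x).ne'
  refine h.congr_deriv ?_
  rw [lgT_eq, lgE]
  field_simp

lemma continuous_lgT : Continuous lgT :=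
  (Real.continuous_sinh.div Real.continuous_cosh (fun x => (Real.cosh_pos x).ne')).congr
    (fun x => (lgT_eq x).symm)

lemma continuous_lgE : Continuous lgE :=
  Real.continuous_cosh.inv₀ (fun x => (Real.cosh_pos x).ne')

lemma tendsto_cosh_atTop : Tendsto Real.cosh atTop atTop := by
  apply tendsto_atTop_mono (fun x => ?_) (Real.tendsto_exp_atTop.atTop_div_const two_pos)
  rw [Real.cosh_eq]
  have := (Real.exp_pos (-x)).le
  linarith

lemma tendsto_cosh_atBot : Tendsto Real.cosh atBot atTop := by
  have h := tendsto_cosh_atTop.comp tendsto_neg_atBot_atTop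
  refine h.congr fun x => ?_
  simp [Function.comp, Real.cosh_neg]

lemma tendsto_lgE_atTop : Tendsto lgE atTop (𝓝 0) := tendsto_cosh_atTop.inv_tendsto_atTop

lemma tendsto_lgE_atBot : Tendsto lgE atBot (𝓝 0) := tendsto_cosh_atBot.inv_tendsto_atTop

lemma lgT_id_top (x : ℝ) : lgT x = 1 - Real.exp (-x) * lgE x := by
  rw [lgT_eq, lgE, Real.sinh_eq, Real.cosh_eq]
  have hc := (Real.cosh_pos x).ne'
  rw [Real.cosh_eq] at hc
  have he : Real.exp (-x) = (Real.exp x)⁻¹ := Real.exp_neg x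
  have hx := (Real.exp_pos x).ne'
  field_simp
  ring

lemma lgT_id_bot (x : ℝ) : lgT x = -1 + Real.exp x * lgE x := by
  rw [lgT_eq, lgE, Real.sinh_eq, Real.cosh_eq]
  have hc := (Real.cosh_pos x).ne'
  rw [Real.cosh_eq] at hc
  have he : Real.exp (-x) = (Real.exp x)⁻¹ := Real.exp_neg x
  have hx := (Real.exp_pos x).ne'
  field_simp
  ring

lemma tendsto_lgT_atTop : Tendsto lgT atTop (𝓝 1) := by
  have h1 : Tendsto (fun x => Real.exp (-x)) atTop (𝓝 0) := by
    have := Real.tendsto_exp_atBot.comp tendsto_neg_atTop_atBot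
    exact this
  have h := (tendsto_const_nhds (x := (1:ℝ))).sub (h1.mul tendsto_lgE_atTop)
  simp only [mul_zero, sub_zero] at h
  exact h.congr fun x => (lgT_id_top x).symm

lemma tendsto_lgT_atBot : Tendsto lgT atBot (𝓝 (-1)) := by
  have h1 : Tendsto Real.exp atBot (𝓝 0) := Real.tendsto_exp_atBot
  have h := (tendsto_const_nhds (x := (-1:ℝ))).add (h1.mul tendsto_lgE_atBot)
  simp only [zero_mul, mul_zero, add_zero] at h
  exact h.congr fun x => (lgT_id_bot x).symm

lemma lgT_mono : Monotone lgT := by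
  intro a b hab
  rw [lgT_eq, lgT_eq, div_le_div_iff₀ (Real.cosh_pos a) (Real.cosh_pos b)]
  have h : 0 ≤ Real.sinh (b - a) := by
    rw [Real.sinh_nonneg_iff]; linarith
  rw [Real.sinh_sub] at h
  linarith

lemma abs_lgT (x : ℝ) : |lgT x| = lgT |x| := by
  rw [lgT_eq, lgT_eq, abs_div, Real.abs_sinh, Real.cosh_abs, abs_of_pos (Real.cosh_pos x)]

lemma lgT_one_le {x : ℝ} (hx : 1 ≤ |x|) : Real.tanh 1 ≤ |lgT x| := by
  rw [abs_lgT]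
  exact lgT_mono hx

lemma lgT_one_pos : 0 < Real.tanh 1 := by
  rw [Real.tanh_eq_sinh_div_cosh]
  exact div_pos (by rw [Real.sinh_pos_iff]; norm_num) (Real.cosh_pos 1)

lemma cosh_sq_ge (x : ℝ) : 1 + x ^ 2 ≤ Real.cosh x ^ 2 := by
  have h1 : |x| ≤ Real.sinh |x| := by
    rcases eq_or_lt_of_le (abs_nonneg x) with h | h
    · simp [← h]
    · exact (Real.self_lt_sinh_iff.2 h).le
  have h2 : x ^ 2 ≤ Real.sinh x ^ 2 := by
    have := Real.abs_sinh x
    nlinarith [abs_nonneg x, sq_abs x, sq_abs (Real.sinh x)]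
  nlinarith [Real.cosh_sq_sub_sinh_sq x]

lemma integrable_lgE_sq : Integrable (fun x => lgE x ^ 2) := by
  refine integrable_inv_one_add_sq.mono' ?_ ?_
  · exact ((continuous_lgE.pow 2)).aestronglyMeasurable
  · refine ae_of_all _ fun x => ?_
    rw [Real.norm_eq_abs, abs_of_pos (pow_pos (lgE_pos x) 2), lgE]
    rw [inv_pow, inv_le_inv₀ (by positivity) (by positivity)]
    exact cosh_sq_ge x

noncomputable def lgK (f : ℝ → ℝ) (x : ℝ) : ℝ :=
  if x = 0 then deriv f 0 else (f x - f 0 * lgE x) / lgT x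

noncomputable def lgS (f : ℝ → ℝ) (x : ℝ) : ℝ :=
  deriv f x + f 0 * (lgE x * lgT x) - (1 - lgT x ^ 2) * lgK f x

noncomputable def lgPhi (f : ℝ → ℝ) (x : ℝ) : ℝ :=
  (1 - lgT x ^ 2) * lgT x * lgK f x ^ 2 - 2 * f 0 * (f x * (lgE x * lgT x))
    - f 0 ^ 2 * (lgT x ^ 3 - 2 * lgT x)

noncomputable def lgG (f : ℝ → ℝ) (x : ℝ) : ℝ :=
  deriv f x ^ 2 - 2 * ((1 - lgT x ^ 2) * f x ^ 2) + 2 * f 0 * (f x * lgE x) - lgS f x ^ 2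

section main
variable {f : ℝ → ℝ} (hf : ContDiff ℝ 2 f)

include hf

lemma hdf : Continuous (deriv f) := hf.continuous_deriv one_le_two

lemma hfd (x : ℝ) : HasDerivAt f (deriv f x) x :=
  ((hf.differentiable two_ne_zero) x).hasDerivAt

lemma lgK_tendsto_zero : Tendsto (lgK f) (𝓝[≠] 0) (𝓝 (deriv f 0)) := by
  have hr : HasDerivAt (fun y => f y - f 0 * lgE y) (deriv f 0) 0 := by
    have h := (hfd hf 0).sub ((hasDerivAt_lgE 0).const_mul (f 0))
    exact h.congr_deriv (by simp [lgT_zero])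
  have h1 := hasDerivAt_iff_tendsto_slope.1 hr
  have h2' := hasDerivAt_iff_tendsto_slope.1 (hasDerivAt_lgT 0)
  rw [lgT_zero] at h2'
  norm_num at h2'
  have h3 := h1.div h2' one_ne_zero
  rw [div_one] at h3
  refine h3.congr' ?_
  filter_upwards [self_mem_nhdsWithin] with y (hy : y ≠ 0)
  have hr0 : f 0 - f 0 * lgE 0 = 0 := by rw [lgE_zero]; ring
  show slope (fun y => f y - f 0 * lgE y) 0 y / slope lgT 0 y = lgK f y
  rw [slope_def_field, slope_def_field, lgT_zero, hr0, lgK, if_neg hy]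
  rw [sub_zero, sub_zero, sub_zero]
  field_simp

lemma continuousAt_lgK_zero : ContinuousAt (lgK f) 0 := by
  rw [ContinuousAt]
  have : lgK f 0 = deriv f 0 := by rw [lgK, if_pos rfl]
  rw [this, ← nhdsNE_sup_pure (0:ℝ), tendsto_sup]
  exact ⟨lgK_tendsto_zero hf, by rw [← this]; exact tendsto_pure_nhds _ _⟩

lemma continuous_lgK : Continuous (lgK f) := by
  rw [continuous_iff_continuousAt]
  intro x
  rcases eq_or_ne x 0 with rfl | hx
  · exact continuousAt_lgK_zero hf
  · have hform : ContinuousAt (fun y => (f y - f 0 * lgE y) / lgT y) x :=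
      ((hf.continuous.sub (continuous_const.mul continuous_lgE)).continuousAt).div
        continuous_lgT.continuousAt (lgT_ne hx)
    refine hform.congr ?_
    filter_upwards [eventually_ne_nhds hx] with y hy
    rw [lgK, if_neg hy]

lemma continuous_lgS : Continuous (lgS f) := by
  unfold lgS
  exact ((hdf hf).add (continuous_const.mul (continuous_lgE.mul continuous_lgT))).sub
    (((continuous_const.sub (continuous_lgT.pow 2)).mul (continuous_lgK hf)))

lemma continuous_lgPhi : Continuous (lgPhi f) := by
  unfold lgPhi
  have hk := continuous_lgK hf
  have hT := continuous_lgT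
  have hE := continuous_lgE
  have hc := hf.continuous
  exact (((continuous_const.sub (hT.pow 2)).mul hT).mul (hk.pow 2)).sub
      (continuous_const.mul (hc.mul (hE.mul hT))) |>.sub
      (continuous_const.mul ((hT.pow 3).sub (continuous_const.mul hT)))

lemma hasDerivAt_lgPhi {x : ℝ} (hx : x ≠ 0) : HasDerivAt (lgPhi f) (lgG f x) x := by
  have hT := hasDerivAt_lgT x
  have hE := hasDerivAt_lgE x
  have hfx := hfd hf x
  have hu : HasDerivAt (fun y => f y - f 0 * lgE y)
      (deriv f x - f 0 * -(lgE x * lgT x)) x := hfx.sub (hE.const_mul (f 0))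
  have hkx : HasDerivAt (lgK f)
      (((deriv f x - f 0 * -(lgE x * lgT x)) * lgT x
        - (f x - f 0 * lgE x) * (1 - lgT x ^ 2)) / lgT x ^ 2) x := by
    refine HasDerivAt.congr_of_eventuallyEq (hu.div hT (lgT_ne hx)) ?_
    filter_upwards [eventually_ne_nhds hx] with y hy
    rw [lgK, if_neg hy]
    rfl
  have hA := (((hasDerivAt_const x (1:ℝ)).sub (hT.pow 2)).mul hT).mul (hkx.pow 2)
  have hB := (hfx.mul (hE.mul hT)).const_mul (2 * f 0)
  have hC := ((hT.pow 3).sub (hT.const_mul 2)).const_mul (f 0 ^ 2)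
  have hD := (hA.sub hB).sub hC
  have hPhi : lgPhi f = fun y => (1 - lgT y ^ 2) * lgT y * lgK f y ^ 2
      - 2 * f 0 * (f y * (lgE y * lgT y)) - f 0 ^ 2 * (lgT y ^ 3 - 2 * lgT y) := rfl
  rw [hPhi]
  refine hD.congr_deriv ?_
  symm
  simp only [Pi.mul_apply, Pi.sub_apply, Pi.pow_apply]
  have hTk : lgT x * lgK f x = f x - f 0 * lgE x := by
    rw [lgK, if_neg hx]
    exact mul_div_cancel₀ _ (lgT_ne hx)
  have hkp2 : lgT x ^ 2 * (((deriv f x - f 0 * -(lgE x * lgT x)) * lgT x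
        - (f x - f 0 * lgE x) * (1 - lgT x ^ 2)) / lgT x ^ 2)
      = (deriv f x - f 0 * -(lgE x * lgT x)) * lgT x
        - (f x - f 0 * lgE x) * (1 - lgT x ^ 2) := by
    rw [mul_div_cancel₀ _ (pow_ne_zero 2 (lgT_ne hx))]
  have hE2x := lgE2 x
  have h4 : (lgT x)^4 ≠ 0 := pow_ne_zero _ (lgT_ne hx)
  apply mul_left_cancel₀ h4
  unfold lgG lgS
  linear_combination (-(3*lgT x^6*f 0^2 - 2*lgT x^4*f 0^2)) * hE2x
    + (-(2*lgT x^3*lgK f x - 2*lgT x^4*f x + 2*lgT x^4*lgE x*f 0 - 6*lgT x^5*lgK f x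
        + 2*lgT x^6*f x - 2*lgT x^6*lgE x*f 0 + 4*lgT x^7*lgK f x)) * hTk
    + (-(2*lgT x^3*lgK f x - 2*lgT x^5*lgK f x)) * hkp2

omit hf in
lemma lgvanish (hsupp : HasCompactSupport f) : ∀ x ∉ tsupport f, f x = 0 ∧ deriv f x = 0 := by
  intro x hx
  refine ⟨image_eq_zero_of_notMem_tsupport hx, ?_⟩
  have hev : f =ᶠ[𝓝 x] (fun _ => (0:ℝ)) := by
    filter_upwards [(isClosed_tsupport f).isOpen_compl.mem_nhds hx] with y hy
    exact image_eq_zero_of_notMem_tsupport hy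
  rw [hev.deriv_eq]
  exact deriv_const x 0

omit hf in
lemma lgvanishA (hsupp : HasCompactSupport f) :
    ∃ A : ℝ, 1 ≤ A ∧ ∀ x, A ≤ |x| → f x = 0 ∧ deriv f x = 0 := by
  obtain ⟨R, hR⟩ := hsupp.isBounded.subset_closedBall 0
  refine ⟨max (R + 1) 1, le_max_right _ _, fun x hx => ?_⟩
  apply lgvanish hsupp
  intro hmem
  have := hR hmem
  rw [Metric.mem_closedBall, Real.dist_eq, sub_zero] at this
  have h1 : R + 1 ≤ |x| := le_trans (le_max_left _ _) hx
  linarith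

lemma tendsto_lgPhi_atTop (hsupp : HasCompactSupport f) :
    Tendsto (lgPhi f) atTop (𝓝 (f 0 ^ 2)) := by
  obtain ⟨A, hA1, hA⟩ := lgvanishA hsupp
  have hfTop : Tendsto f atTop (𝓝 0) := by
    refine tendsto_const_nhds.congr' ?_
    filter_upwards [eventually_ge_atTop A] with x hx
    exact ((hA x (by rw [abs_of_pos (by linarith)]; exact hx)).1).symm
  have hkTop : Tendsto (lgK f) atTop (𝓝 0) := by
    have h0 : Tendsto (fun x => (f x - f 0 * lgE x) / lgT x) atTop (𝓝 ((0 - f 0 * 0) / 1)) :=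
      (hfTop.sub (tendsto_lgE_atTop.const_mul (f 0))).div tendsto_lgT_atTop one_ne_zero
    norm_num at h0
    refine h0.congr' ?_
    filter_upwards [eventually_ge_atTop 1] with x hx
    rw [lgK, if_neg (by positivity : x ≠ 0)]
  have hbig : Tendsto (fun x => (1 - lgT x ^ 2) * lgT x * lgK f x ^ 2
      - 2 * f 0 * (f x * (lgE x * lgT x)) - f 0 ^ 2 * (lgT x ^ 3 - 2 * lgT x)) atTop
      (𝓝 ((1 - 1 ^ 2) * 1 * 0 ^ 2 - 2 * f 0 * (0 * (0 * 1)) - f 0 ^ 2 * (1 ^ 3 - 2 * 1))) := by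
    exact (((((tendsto_const_nhds.sub (tendsto_lgT_atTop.pow 2)).mul tendsto_lgT_atTop).mul
      (hkTop.pow 2)).sub ((hfTop.mul (tendsto_lgE_atTop.mul tendsto_lgT_atTop)).const_mul
      (2 * f 0))).sub (((tendsto_lgT_atTop.pow 3).sub (tendsto_lgT_atTop.const_mul 2)).const_mul
      (f 0 ^ 2)))
  norm_num at hbig
  exact hbig

lemma tendsto_lgPhi_atBot (hsupp : HasCompactSupport f) :
    Tendsto (lgPhi f) atBot (𝓝 (-(f 0 ^ 2))) := by
  obtain ⟨A, hA1, hA⟩ := lgvanishA hsupp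
  have hfBot : Tendsto f atBot (𝓝 0) := by
    refine tendsto_const_nhds.congr' ?_
    filter_upwards [eventually_le_atBot (-A)] with x hx
    exact ((hA x (by rw [abs_of_neg (by linarith)]; linarith)).1).symm
  have hkBot : Tendsto (lgK f) atBot (𝓝 0) := by
    have h0 : Tendsto (fun x => (f x - f 0 * lgE x) / lgT x) atBot (𝓝 ((0 - f 0 * 0) / (-1))) :=
      (hfBot.sub (tendsto_lgE_atBot.const_mul (f 0))).div tendsto_lgT_atBot (by norm_num)
    norm_num at h0
    refine h0.congr' ?_
    filter_upwards [eventually_le_atBot (-1 : ℝ)] with x hx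
    rw [lgK, if_neg (by intro h; rw [h] at hx; norm_num at hx)]
  have hbig : Tendsto (fun x => (1 - lgT x ^ 2) * lgT x * lgK f x ^ 2
      - 2 * f 0 * (f x * (lgE x * lgT x)) - f 0 ^ 2 * (lgT x ^ 3 - 2 * lgT x)) atBot
      (𝓝 ((1 - (-1) ^ 2) * (-1) * 0 ^ 2 - 2 * f 0 * (0 * (0 * (-1))) -
        f 0 ^ 2 * ((-1) ^ 3 - 2 * (-1)))) := by
    exact (((((tendsto_const_nhds.sub (tendsto_lgT_atBot.pow 2)).mul tendsto_lgT_atBot).mul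
      (hkBot.pow 2)).sub ((hfBot.mul (tendsto_lgE_atBot.mul tendsto_lgT_atBot)).const_mul
      (2 * f 0))).sub (((tendsto_lgT_atBot.pow 3).sub (tendsto_lgT_atBot.const_mul 2)).const_mul
      (f 0 ^ 2)))
  norm_num at hbig
  exact hbig

lemma lgS_bound (hsupp : HasCompactSupport f) : ∃ K, ∀ x, |lgS f x| ≤ K * lgE x := by
  obtain ⟨A, hA1, hA⟩ := lgvanishA hsupp
  obtain ⟨M, hM⟩ := (isCompact_Icc (a := -A) (b := A)).exists_bound_of_continuousOn
    (continuous_lgS hf).continuousOn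
  have hM0 : 0 ≤ M := le_trans (norm_nonneg _) (hM 0 (by constructor <;> linarith))
  refine ⟨max (M * Real.cosh A) (|f 0| / Real.tanh 1), fun x => ?_⟩
  rcases le_or_gt |x| A with hx | hx
  · have h1 : |lgS f x| ≤ M := hM x (abs_le.1 hx)
    have h2 : Real.cosh x ≤ Real.cosh A := by
      rw [Real.cosh_le_cosh]
      rwa [abs_of_pos (by linarith : (0:ℝ) < A)]
    have h3 : M ≤ M * Real.cosh A * lgE x := by
      rw [lgE, mul_assoc]
      have h4 : (Real.cosh A)⁻¹ ≤ (Real.cosh x)⁻¹ :=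
        inv_anti₀ (Real.cosh_pos x) h2
      have h5 : 1 ≤ Real.cosh A * (Real.cosh x)⁻¹ := by
        rw [← mul_inv_cancel₀ (Real.cosh_pos A).ne']
        exact mul_le_mul_of_nonneg_left h4 (Real.cosh_pos A).le
      nlinarith
    calc |lgS f x| ≤ M := h1
    _ ≤ M * Real.cosh A * lgE x := h3
    _ ≤ max (M * Real.cosh A) (|f 0| / Real.tanh 1) * lgE x :=
        mul_le_mul_of_nonneg_right (le_max_left _ _) (lgE_pos x).le
  · have hx0 : x ≠ 0 := by intro h; rw [h] at hx; simp at hx; linarith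
    obtain ⟨hfx, hdfx⟩ := hA x hx.le
    have hs : lgS f x = f 0 * lgE x / lgT x := by
      rw [lgS, lgK, if_neg hx0, hfx, hdfx]
      field_simp [lgT_ne hx0]
      ring
    rw [hs]
    have hT1 : Real.tanh 1 ≤ |lgT x| := lgT_one_le (by linarith)
    rw [abs_div, abs_mul, abs_of_pos (lgE_pos x)]
    have h6 : |f 0| * lgE x / |lgT x| ≤ |f 0| * lgE x / Real.tanh 1 := by
      exact div_le_div_of_nonneg_left (mul_nonneg (abs_nonneg _) (lgE_pos x).le)
        lgT_one_pos hT1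
    calc |f 0| * lgE x / |lgT x| ≤ |f 0| * lgE x / Real.tanh 1 := h6
    _ = (|f 0| / Real.tanh 1) * lgE x := by ring
    _ ≤ max (M * Real.cosh A) (|f 0| / Real.tanh 1) * lgE x :=
        mul_le_mul_of_nonneg_right (le_max_right _ _) (lgE_pos x).le

lemma integrable_lgS_sq (hsupp : HasCompactSupport f) :
    Integrable (fun x => lgS f x ^ 2) := by
  obtain ⟨K, hK⟩ := lgS_bound hf hsupp
  have hK0 : 0 ≤ K := by
    have := (abs_nonneg (lgS f 0)).trans (hK 0)
    rw [lgE_zero, mul_one] at this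
    exact this
  refine (integrable_lgE_sq.const_mul (K ^ 2)).mono'
    (((continuous_lgS hf).pow 2).aestronglyMeasurable) (ae_of_all _ fun x => ?_)
  rw [Real.norm_eq_abs, abs_of_nonneg (sq_nonneg _), ← sq_abs]
  calc |lgS f x| ^ 2 ≤ (K * lgE x) ^ 2 := by
        apply pow_le_pow_left₀ (abs_nonneg _) (hK x)
  _ = K ^ 2 * lgE x ^ 2 := by ring

end main

/-- Spectral gap of size `1` for `L` above its kernel: if `f` is compactly supported, `C²`,
and `L²`-orthogonal to `x ↦ 1/cosh x`, then `∫ (f'² + (2 tanh² - 1) f²) ≥ ∫ f²`. -/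
theorem L_spectral_gap (f : ℝ → ℝ) (hf : ContDiff ℝ 2 f) (hsupp : HasCompactSupport f)
    (horth : ∫ x : ℝ, f x / Real.cosh x = 0) :
    (∫ x : ℝ, f x ^ 2) ≤ ∫ x : ℝ, (deriv f x ^ 2 + (2 * Real.tanh x ^ 2 - 1) * f x ^ 2) := by
  have hvan := lgvanish (f := f) hsupp
  -- integrability of the compactly supported pieces
  have hcs : ∀ g : ℝ → ℝ, Continuous g → Integrable (fun x => g x * f x ^ 2) := by
    intro g hg
    refine (hg.mul ((hf.continuous.pow 2))).integrable_of_hasCompactSupport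
      (HasCompactSupport.intro hsupp fun x hx => ?_)
    simp [(hvan x hx).1]
  have P1 : Integrable (fun x => deriv f x ^ 2) := by
    refine (((hdf hf).pow 2)).integrable_of_hasCompactSupport
      (HasCompactSupport.intro hsupp fun x hx => ?_)
    simp [(hvan x hx).2]
  have P2 : Integrable (fun x => (1 - lgT x ^ 2) * f x ^ 2) :=
    hcs _ (continuous_const.sub (continuous_lgT.pow 2))
  have P3 : Integrable (fun x => f x * lgE x) := by
    refine (hf.continuous.mul continuous_lgE).integrable_of_hasCompactSupport
      (HasCompactSupport.intro hsupp fun x hx => ?_)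
    simp [(hvan x hx).1]
  have P5 : Integrable (fun x => f x ^ 2) := by
    have := hcs _ (continuous_const (y := (1:ℝ)))
    simpa using this
  have hS2 := integrable_lgS_sq hf hsupp
  have hGint : Integrable (lgG f) :=
    ((P1.sub (P2.const_mul 2)).add (P3.const_mul (2 * f 0))).sub hS2
  -- FTC on both halves
  have hPhi0 : lgPhi f 0 = 0 := by
    rw [lgPhi, lgT_zero]; ring
  have hIoi : ∫ x in Ioi 0, lgG f x = f 0 ^ 2 - lgPhi f 0 :=
    integral_Ioi_of_hasDerivAt_of_tendsto (continuous_lgPhi hf).continuousWithinAt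
      (fun x hx => hasDerivAt_lgPhi hf (ne_of_gt hx)) hGint.integrableOn
      (tendsto_lgPhi_atTop hf hsupp)
  have hIic : ∫ x in Iic 0, lgG f x = lgPhi f 0 - -(f 0 ^ 2) :=
    integral_Iic_of_hasDerivAt_of_tendsto (continuous_lgPhi hf).continuousWithinAt
      (fun x hx => hasDerivAt_lgPhi hf (ne_of_lt hx)) hGint.integrableOn
      (tendsto_lgPhi_atBot hf hsupp)
  have htot : ∫ x, lgG f x = 2 * f 0 ^ 2 := by
    rw [← intervalIntegral.integral_Iic_add_Ioi (b := 0) (μ := volume) hGint.integrableOn hGint.integrableOn, hIoi, hIic, hPhi0]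
    ring
  -- orthogonality
  have horth' : ∫ x, f x * lgE x = 0 := by
    have hfun0 : (fun x => f x * lgE x) = fun x => f x / Real.cosh x := by
      funext x
      rw [div_eq_mul_inv, lgE]
    rw [hfun0, horth]
  -- split the integral of lgG
  have Q0 : Integrable (fun x => deriv f x ^ 2 - 2 * ((1 - lgT x ^ 2) * f x ^ 2)) := by
    exact P1.sub (P2.const_mul 2)
  have Q3 : Integrable (fun x => 2 * f 0 * (f x * lgE x)) := by
    exact P3.const_mul (2 * f 0)
  have Q1 : Integrable (fun x => deriv f x ^ 2 - 2 * ((1 - lgT x ^ 2) * f x ^ 2)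
      + 2 * f 0 * (f x * lgE x)) := by
    exact Q0.add Q3
  have hsplit : ∫ x, lgG f x = (∫ x, (deriv f x ^ 2 - 2 * ((1 - lgT x ^ 2) * f x ^ 2)))
      + 2 * f 0 * (∫ x, f x * lgE x) - ∫ x, lgS f x ^ 2 := by
    rw [show lgG f = fun x => (deriv f x ^ 2 - 2 * ((1 - lgT x ^ 2) * f x ^ 2)
        + 2 * f 0 * (f x * lgE x)) - lgS f x ^ 2 from rfl]
    rw [integral_sub Q1 hS2]
    rw [integral_add Q0 Q3]
    congr 1
    rw [MeasureTheory.integral_const_mul]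
  have hkey : 0 ≤ ∫ x, (deriv f x ^ 2 - 2 * ((1 - lgT x ^ 2) * f x ^ 2)) := by
    have hs2 : 0 ≤ ∫ x, lgS f x ^ 2 := integral_nonneg fun x => sq_nonneg _
    have := hsplit.symm.trans htot
    rw [horth'] at this
    nlinarith [sq_nonneg (f 0)]
  -- final rearrangement
  have hfun : (fun x => deriv f x ^ 2 + (2 * Real.tanh x ^ 2 - 1) * f x ^ 2)
      = fun x => (deriv f x ^ 2 - 2 * ((1 - lgT x ^ 2) * f x ^ 2)) + f x ^ 2 := by
    funext x
    rw [lgT]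
    ring
  have Q0' : Integrable (fun x => deriv f x ^ 2 - 2 * ((1 - lgT x ^ 2) * f x ^ 2)) := by
    exact P1.sub (P2.const_mul 2)
  have hstep : ∫ x, ((deriv f x ^ 2 - 2 * ((1 - lgT x ^ 2) * f x ^ 2)) + f x ^ 2)
      = (∫ x, (deriv f x ^ 2 - 2 * ((1 - lgT x ^ 2) * f x ^ 2))) + ∫ x, f x ^ 2 :=
    integral_add Q0' P5
  calc ∫ x : ℝ, f x ^ 2
      ≤ (∫ x, (deriv f x ^ 2 - 2 * ((1 - lgT x ^ 2) * f x ^ 2))) + ∫ x, f x ^ 2 := by linarith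
    _ = ∫ x, ((deriv f x ^ 2 - 2 * ((1 - lgT x ^ 2) * f x ^ 2)) + f x ^ 2) := hstep.symm
    _ = ∫ x : ℝ, (deriv f x ^ 2 + (2 * Real.tanh x ^ 2 - 1) * f x ^ 2) := by rw [hfun]
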